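/- Let q be a real number with 0 < q ≤ 1/2. Let n₁, n₂ be positive integers with n = n₁ + n₂ ≥ 2, let b₁, b₂ be positive integers with b = b₁ + b₂, and let a be an integer with a ≥ b. Define G = q·log max{n₁, n₂} + log 2 + min{−q·log q, e⁻¹}, H = q·log n + min{−q·log q, e⁻¹}, and L = (q/a)·(b₁·(ξ_b − ξ_{b₁}) + b₂·(ξ_b − ξ_{b₂})), where ξ_n = Σ_{j=1}^n 1/j. Then G ≥ H + L; consequently, in Theorem 2's setting, whenever q_A ≤ 1/2 for all atoms A, the martingale increment bound ζ_k = max{G_k, H_k + L_k} equals G_k for every k. -/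

import Mathlib

/-- The `n`-th harmonic number `ξ_n = Σ_{j=1}^n 1/j`. -/
noncomputable def xi (n : ℕ) : ℝ := ∑ j ∈ Finset.range n, (1 : ℝ) / (j + 1)

lemma xi_succ (n : ℕ) : xi (n + 1) = xi n + 1 / (n + 1) := by
  simp [xi, Finset.sum_range_succ]

lemma xi_sub_le_log {m n : ℕ} (hm : 1 ≤ m) (hmn : m ≤ n) :
    xi n - xi m ≤ Real.log n - Real.log m := by
  induction n with
  | zero => omega
  | succ n ih =>
    rcases eq_or_lt_of_le hmn with h | h
    · simp [h]
    · have hmn' : m ≤ n := by omega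
      have hn0 : (0:ℝ) < n := by
        have : 1 ≤ n := le_trans hm hmn'
        exact_mod_cast this
      have hstep : (1:ℝ) / (n + 1) ≤ Real.log (n + 1) - Real.log n := by
        have hx : (0:ℝ) < (n:ℝ) / (n + 1) := by positivity
        have := Real.log_le_sub_one_of_pos hx
        rw [Real.log_div (ne_of_gt hn0) (by positivity)] at this
        have h2 : (n:ℝ) / (n + 1) - 1 = -(1 / (n + 1)) := by
          field_simp
          ring
        rw [h2] at this
        linarith
      have := ih hmn'
      rw [xi_succ]
      push_cast
      push_cast at hstep this
      linarith

lemma key_entropy {b₁ b₂ : ℕ} (hb₁ : 1 ≤ b₁) (hb₂ : 1 ≤ b₂) :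
    (b₁:ℝ) * (xi (b₁ + b₂) - xi b₁) + (b₂:ℝ) * (xi (b₁ + b₂) - xi b₂)
      ≤ (b₁ + b₂ : ℝ) * Real.log 2 := by
  set b : ℕ := b₁ + b₂ with hb
  have hb1b : b₁ ≤ b := by omega
  have hb2b : b₂ ≤ b := by omega
  have h1 := xi_sub_le_log hb₁ hb1b
  have h2 := xi_sub_le_log hb₂ hb2b
  have hb₁0 : (0:ℝ) < (b₁:ℝ) := by exact_mod_cast hb₁
  have hb₂0 : (0:ℝ) < (b₂:ℝ) := by exact_mod_cast hb₂
  have hb0 : (0:ℝ) < (b:ℝ) := by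
    have : 1 ≤ b := by omega
    exact_mod_cast this
  have hlog : (b₁:ℝ) * (Real.log b - Real.log b₁) + (b₂:ℝ) * (Real.log b - Real.log b₂)
      ≤ (b:ℝ) * Real.log 2 := by
    have hent : Real.binEntropy ((b₁:ℝ) / b) ≤ Real.log 2 := Real.binEntropy_le_log_two
    have hrw : Real.binEntropy ((b₁:ℝ) / b)
        = ((b₁:ℝ) / b) * (Real.log b - Real.log b₁)
          + ((b₂:ℝ) / b) * (Real.log b - Real.log b₂) := by
      have h1p : (1 : ℝ) - (b₁:ℝ) / b = (b₂:ℝ) / b := by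
        field_simp
        push_cast [hb]
        ring
      rw [Real.binEntropy, h1p]
      have e1 : ((b₁:ℝ) / b)⁻¹ = (b:ℝ) / b₁ := by
        rw [inv_div]
      have e2 : ((b₂:ℝ) / b)⁻¹ = (b:ℝ) / b₂ := by
        rw [inv_div]
      rw [e1, e2, Real.log_div (ne_of_gt hb0) (ne_of_gt hb₁0),
        Real.log_div (ne_of_gt hb0) (ne_of_gt hb₂0)]
    rw [hrw] at hent
    have := mul_le_mul_of_nonneg_left hent (le_of_lt hb0)
    calc (b₁:ℝ) * (Real.log b - Real.log b₁) + (b₂:ℝ) * (Real.log b - Real.log b₂)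
        = (b:ℝ) * (((b₁:ℝ) / b) * (Real.log b - Real.log b₁)
          + ((b₂:ℝ) / b) * (Real.log b - Real.log b₂)) := by
          field_simp
      _ ≤ (b:ℝ) * Real.log 2 := this
  have t1 : (b₁:ℝ) * (xi b - xi b₁) ≤ (b₁:ℝ) * (Real.log b - Real.log b₁) :=
    mul_le_mul_of_nonneg_left h1 (le_of_lt hb₁0)
  have t2 : (b₂:ℝ) * (xi b - xi b₂) ≤ (b₂:ℝ) * (Real.log b - Real.log b₂) :=
    mul_le_mul_of_nonneg_left h2 (le_of_lt hb₂0)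
  have hcast : ((b:ℕ):ℝ) = (b₁:ℝ) + (b₂:ℝ) := by push_cast [hb]; ring
  rw [hcast] at hlog t1 t2
  linarith

theorem G_ge_H_add_L (q : ℝ) (hq0 : 0 < q) (hq : q ≤ 1 / 2)
    (n₁ n₂ : ℕ) (hn₁ : 1 ≤ n₁) (hn₂ : 1 ≤ n₂) (hn : 2 ≤ n₁ + n₂)
    (b₁ b₂ : ℕ) (hb₁ : 1 ≤ b₁) (hb₂ : 1 ≤ b₂)
    (a : ℕ) (hab : b₁ + b₂ ≤ a)
    (G H L : ℝ)
    (hG : G = q * Real.log ((max n₁ n₂ : ℕ) : ℝ) + Real.log 2 +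
      min (-q * Real.log q) (Real.exp 1)⁻¹)
    (hH : H = q * Real.log ((n₁ + n₂ : ℕ) : ℝ) +
      min (-q * Real.log q) (Real.exp 1)⁻¹)
    (hL : L = (q / (a : ℝ)) * ((b₁ : ℝ) * (xi (b₁ + b₂) - xi b₁) +
      (b₂ : ℝ) * (xi (b₁ + b₂) - xi b₂))) :
    H + L ≤ G ∧ max G (H + L) = G := by
  have ha0 : (0:ℝ) < (a:ℝ) := by
    have : 1 ≤ a := by omega
    exact_mod_cast this
  have hlog2 : (0:ℝ) < Real.log 2 := Real.log_pos (by norm_num)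
  -- L ≤ q * log 2
  have hS := key_entropy hb₁ hb₂
  have hL2 : L ≤ q * Real.log 2 := by
    rw [hL]
    have hba : ((b₁:ℝ) + b₂) ≤ (a:ℝ) := by exact_mod_cast hab
    have : (q / a) * ((b₁ : ℝ) * (xi (b₁ + b₂) - xi b₁) +
        (b₂ : ℝ) * (xi (b₁ + b₂) - xi b₂)) ≤ (q / a) * (((b₁:ℝ) + b₂) * Real.log 2) :=
      mul_le_mul_of_nonneg_left hS (by positivity)
    calc (q / a) * ((b₁ : ℝ) * (xi (b₁ + b₂) - xi b₁) +
        (b₂ : ℝ) * (xi (b₁ + b₂) - xi b₂)) ≤ (q / a) * (((b₁:ℝ) + b₂) * Real.log 2) := this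
      _ ≤ (q / a) * ((a:ℝ) * Real.log 2) := by
          apply mul_le_mul_of_nonneg_left _ (by positivity)
          exact mul_le_mul_of_nonneg_right hba (le_of_lt hlog2)
      _ = q * Real.log 2 := by field_simp
  -- log n ≤ log 2 + log max
  have hmaxpos : (0:ℝ) < ((max n₁ n₂ : ℕ):ℝ) := by
    have : 1 ≤ max n₁ n₂ := le_trans hn₁ (Nat.le_max_left _ _)
    exact_mod_cast this
  have hnle : ((n₁ + n₂ : ℕ):ℝ) ≤ 2 * ((max n₁ n₂ : ℕ):ℝ) := by
    have : n₁ + n₂ ≤ 2 * max n₁ n₂ := by omega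
    exact_mod_cast this
  have hlogn : Real.log ((n₁ + n₂ : ℕ):ℝ) ≤ Real.log 2 + Real.log ((max n₁ n₂ : ℕ):ℝ) := by
    rw [← Real.log_mul (by norm_num) (ne_of_gt hmaxpos)]
    apply Real.log_le_log (by positivity) hnle
  have hmain : H + L ≤ G := by
    rw [hG, hH]
    have := mul_le_mul_of_nonneg_left hlogn (le_of_lt hq0)
    nlinarith [hlog2, hq, hq0, hL2]
  exact ⟨hmain, max_eq_left hmain⟩
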